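/- Let w be a string and 1 ≤ i ≤ |w|. Among all maximal palindromes w[l..r] of w with r ≥ i and l + r ≤ 2i, let w[l*..r*] be the one minimizing the center (l + r)/2 (such a maximal palindrome exists, e.g., the maximal palindrome centered at i). Then the length of the longest palindromic suffix of w[1..i] equals 2i − l* − r* + 1; that is, the longest palindromic suffix of w[1..i] is w[l* + r* − i..i]. -/

import Mathlib

open scoped ENat

variable {α : Type*}

/-- `w` is a palindrome. -/
def IsPal (w : List α) : Prop := w.reverse = w

/-- The substring `w[i..j]`, 1-indexed, inclusive; empty if `i > j`. -/
def sub (w : List α) (i j : ℕ) : List α := (w.take j).drop (i - 1)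

/-- Two strings of the same length pal-match: they agree on which substrings
`w[i..j]` (for `1 ≤ i < j ≤ |w|`) are palindromes. -/
def PalMatch (x y : List α) : Prop :=
  x.length = y.length ∧
    ∀ i j, 1 ≤ i → i < j → j ≤ x.length → (IsPal (sub x i j) ↔ IsPal (sub y i j))

/-- `sspAt w i` : length of the shortest palindromic suffix of `w[1..i]`
of length at least 2, or `∞` if none exists. -/
noncomputable def sspAt (w : List α) (i : ℕ) : ℕ∞ :=
  sInf {ℓ : ℕ∞ | ∃ u : List α, u <:+ w.take i ∧ IsPal u ∧ 2 ≤ u.length ∧ (u.length : ℕ∞) = ℓ}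

/-- The ssp-encoding of `w` as a sequence of length `|w|` over `ℕ ∪ {∞}`. -/
noncomputable def ssp (w : List α) : List ℕ∞ :=
  (List.range w.length).map fun k => sspAt w (k + 1)

/-- `lpalAt w i` : length of the longest palindromic suffix of `w[1..i]`. -/
noncomputable def lpalAt (w : List α) (i : ℕ) : ℕ :=
  sSup {ℓ : ℕ | ∃ u : List α, u <:+ w.take i ∧ IsPal u ∧ u.length = ℓ}

/-- The lpal-encoding of `w`. -/
noncomputable def lpal (w : List α) : List ℕ :=
  (List.range w.length).map fun k => lpalAt w (k + 1)

/-- `w[l..r]` is a maximal palindrome of `w`: a palindromic substring that cannot be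
extended outwards. -/
def MaxPal {α : Type*} (w : List α) (l r : ℕ) : Prop :=
  1 ≤ l ∧ l ≤ r ∧ r ≤ w.length ∧ IsPal (sub w l r) ∧
    (l = 1 ∨ r = w.length ∨ w[l - 2]? ≠ w[r]?)


section Aux
variable {α : Type*}

lemma pal_mid (p : List α) (hp : IsPal p) (d : ℕ) (hd : 2*d ≤ p.length) :
    IsPal ((p.drop d).take (p.length - 2*d)) := by
  unfold IsPal at *
  rw [List.reverse_take, List.reverse_drop, hp, List.length_drop]
  have hA : p.length - d - (p.length - 2*d) = d := by omega
  rw [hA, List.drop_take]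
  congr 1
  omega

lemma sub_trim_eq (w : List α) (l r d : ℕ) (h1 : 1 ≤ l) (h3 : r ≤ w.length)
    (hd : l + 2*d ≤ r) :
    sub w (l+d) (r-d) = ((sub w l r).drop d).take ((sub w l r).length - 2*d) := by
  simp only [sub, List.drop_take, List.drop_drop, List.take_take, List.length_take,
    List.length_drop]
  have hx : l + d - 1 = l - 1 + d := by omega
  rw [hx]
  congr 1
  omega

lemma pal_extend (w : List α) (l r : ℕ) (hl : 2 ≤ l) (hlr : l ≤ r) (hr : r < w.length)
    (heq : w[l-2]? = w[r]?) (hp : IsPal (sub w l r)) : IsPal (sub w (l-1) (r+1)) := by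
  rw [List.getElem?_eq_getElem hr] at heq
  obtain ⟨hlt, hc⟩ := List.getElem?_eq_some_iff.mp heq
  have h1 : sub w (l-1) (r+1) = w[l-2] :: (sub w l r ++ [w[r]]) := by
    unfold sub
    rw [List.take_succ, List.getElem?_eq_getElem hr]
    have hlen : l - 2 ≤ (w.take r).length := by
      rw [List.length_take]; omega
    have h0 : l - 1 - 1 = l - 2 := by omega
    rw [Option.toList_some, h0, List.drop_append_of_le_length hlen]
    have hidx : l - 2 < (w.take r).length := by rw [List.length_take]; omega
    rw [List.drop_eq_getElem_cons hidx]
    have : l - 2 + 1 = l - 1 := by omega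
    rw [this, List.getElem_take]
    simp
  rw [h1]
  unfold IsPal at *
  simp [List.reverse_append, hp, hc]

lemma pal_extend_max (w : List α) (l r : ℕ) (h1 : 1 ≤ l) (h2 : l ≤ r) (h3 : r ≤ w.length)
    (hp : IsPal (sub w l r)) : ∃ L R, MaxPal w L R ∧ L + R = l + r ∧ r ≤ R := by
  by_cases h : l = 1 ∨ r = w.length ∨ w[l - 2]? ≠ w[r]?
  · exact ⟨l, r, ⟨h1, h2, h3, hp, h⟩, rfl, le_refl r⟩
  · push_neg at h
    obtain ⟨hl1, hrw, heq⟩ := h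
    have hl2 : 2 ≤ l := by omega
    have hrlt : r < w.length := lt_of_le_of_ne h3 hrw
    have hp' := pal_extend w l r hl2 h2 hrlt heq hp
    obtain ⟨L, R, hm, hs, hR⟩ :=
      pal_extend_max w (l-1) (r+1) (by omega) (by omega) (by omega) hp'
    exact ⟨L, R, hm, by omega, by omega⟩
termination_by l
decreasing_by omega

end Aux

/-- Among all maximal palindromes `w[l..r]` with `r ≥ i` and `l + r ≤ 2i`, the one with
the smallest center gives the longest palindromic suffix of `w[1..i]`: it has length
`2i - l - r + 1` and equals `w[l+r-i..i]`. -/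
theorem stmt14 {α : Type*} (w : List α) (i : ℕ) (hi : 1 ≤ i) (hiw : i ≤ w.length)
    (l r : ℕ) (hmp : MaxPal w l r) (hri : i ≤ r) (hlr : l + r ≤ 2 * i)
    (hmin : ∀ l' r', MaxPal w l' r' → i ≤ r' → l' + r' ≤ 2 * i → l + r ≤ l' + r') :
    lpalAt w i = 2 * i + 1 - (l + r) ∧
    (w.take i).drop ((w.take i).length - lpalAt w i) = sub w (l + r - i) i := by
  obtain ⟨hl1, hlr', hrw, hpal, _⟩ := hmp
  set B := 2 * i + 1 - (l + r) with hB
  have hlen_sub : (sub w l r).length = r - l + 1 := by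
    simp only [sub, List.length_drop, List.length_take]; omega
  have htrim := sub_trim_eq w l r (r - i) hl1 hrw (by omega)
  have hpalmid : IsPal (sub w (l + (r-i)) (r - (r-i))) := by
    rw [htrim]; exact pal_mid _ hpal _ (by omega)
  have he1 : l + (r - i) = l + r - i := by omega
  have he2 : r - (r - i) = i := by omega
  rw [he1, he2] at hpalmid
  have hsubeq : sub w (l + r - i) i = (w.take i).drop (l + r - i - 1) := rfl
  have hsuf : sub w (l + r - i) i <:+ w.take i := by
    rw [hsubeq]; exact List.drop_suffix _ _
  have hlen0 : (w.take i).length = i := by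
    rw [List.length_take]; omega
  have hlensuf : (sub w (l + r - i) i).length = B := by
    rw [hsubeq, List.length_drop, hlen0]; omega
  set S : Set ℕ := {ℓ : ℕ | ∃ u : List α, u <:+ w.take i ∧ IsPal u ∧ u.length = ℓ} with hS
  have hmem : B ∈ S := ⟨_, hsuf, hpalmid, hlensuf⟩
  have hbound : ∀ m ∈ S, m ≤ B := by
    rintro m ⟨u, hu, hup, hul⟩
    rcases Nat.eq_zero_or_pos m with hm | hm
    · omega
    · have hmle : m ≤ i := by
        have := hu.length_le; rw [hlen0] at this; omega
      obtain ⟨t, ht⟩ := hu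
      have hdl : (w.take i).drop t.length = u := by rw [← ht]; exact List.drop_left
      have hti : t.length = i - m := by
        have h2 := congrArg List.length ht
        simp only [List.length_append, List.length_take] at h2
        omega
      have hueq : u = (w.take i).drop (i - m) := by rw [← hdl, hti]
      have hupal' : IsPal (sub w (i - m + 1) i) := by
        have h3 : sub w (i - m + 1) i = u := by
          have h4 : i - m + 1 - 1 = i - m := by omega
          rw [hueq]; unfold sub; rw [h4]
        rwa [h3]
      obtain ⟨L, R, hmax, hsum, hRi⟩ :=
        pal_extend_max w (i - m + 1) i (by omega) (by omega) hiw hupal'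
      have := hmin L R hmax (by omega) (by omega)
      omega
  have hlp : lpalAt w i = B := by
    unfold lpalAt
    rw [← hS]
    apply le_antisymm
    · exact csSup_le ⟨B, hmem⟩ hbound
    · exact le_csSup ⟨B, fun x hx => hbound x hx⟩ hmem
  refine ⟨hlp, ?_⟩
  rw [hlp, hsubeq, hlen0]
  congr 1
  omega
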